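/- Let g be a nonempty list of positive natural numbers and let M be the additive submonoid of ℕ generated by the elements of g. Define mgen_g : ℕ → ℕ by mgen_g n = the sum over i in lgen_{|g|−1} n of g[i]. Then every element of M is in the range of mgen_g. -/

import Mathlib

def next (m : ℕ) : List ℕ → List ℕ
  | [] => [0]
  | h :: t =>
    if h < m then (h + 1) :: t
    else
      match next m t with
      | [] => []
      | x :: t' => x :: x :: t'

def lgen (m : ℕ) : ℕ → List ℕ
  | 0 => []
  | n + 1 => next m (lgen m n)

def mgen (g : List ℕ) (n : ℕ) : ℕ :=
  ((lgen (g.length - 1) n).map (fun i => g.getD i 0)).sum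

/-- Predecessor of a canonical (nonincreasing, bounded by m) list in the
enumeration produced by `lgen m`. -/
def lpred (m : ℕ) : List ℕ → List ℕ
  | [] => []
  | [h] => if h = 0 then [] else [h - 1]
  | h :: y :: t => if y < h then (h - 1) :: y :: t else m :: lpred m (y :: t)

/-- Measure under which `lpred` decreases. -/
def lmu (m : ℕ) : List ℕ → ℕ
  | [] => 0
  | h :: t => lmu m t * (m + 2) + (h + 1)

lemma next_lpred (m : ℕ) : ∀ t : List ℕ, t ≠ [] → t.Pairwise (· ≥ ·) →
    (∀ a ∈ t, a ≤ m) → next m (lpred m t) = t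
  | [], h, _, _ => absurd rfl h
  | [h], _, _, hb => by
    by_cases h0 : h = 0
    · subst h0; simp [lpred, next]
    · have hm : h ≤ m := hb h (by simp)
      have : h - 1 < m := lt_of_lt_of_le (Nat.sub_lt (Nat.pos_of_ne_zero h0) one_pos) hm
      simp [lpred, h0, next, this, Nat.sub_add_cancel (Nat.pos_of_ne_zero h0)]
  | h :: y :: t, _, hs, hb => by
    have hyh : y ≤ h := (List.pairwise_cons.mp hs).1 y (by simp)
    by_cases hlt : y < h
    · have hm : h ≤ m := hb h (by simp)
      have h0 : 0 < h := lt_of_le_of_lt (Nat.zero_le y) hlt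
      have : h - 1 < m := lt_of_lt_of_le (Nat.sub_lt h0 one_pos) hm
      simp [lpred, hlt, next, this, Nat.sub_add_cancel h0]
    · have heq : h = y := le_antisymm (not_lt.mp hlt) hyh
      have ih : next m (lpred m (y :: t)) = y :: t :=
        next_lpred m (y :: t) (by simp) (List.pairwise_cons.mp hs).2
          (fun a ha => hb a (List.mem_cons_of_mem _ ha))
      simp only [lpred, hlt, if_false]
      show next m (m :: lpred m (y :: t)) = h :: y :: t
      simp only [next, lt_irrefl, if_false, ih, heq]

lemma lpred_sorted (m : ℕ) : ∀ t : List ℕ, t.Pairwise (· ≥ ·) →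
    (∀ a ∈ t, a ≤ m) → (lpred m t).Pairwise (· ≥ ·) ∧ ∀ a ∈ lpred m t, a ≤ m
  | [] => by simp [lpred]
  | [h] => by
    intro _ hb
    by_cases h0 : h = 0 <;> simp [lpred, h0]
    have := hb h (by simp); omega
  | h :: y :: t => by
    intro hs hb
    have hyh : y ≤ h := (List.pairwise_cons.mp hs).1 y (by simp)
    have hs' : (y :: t).Pairwise (· ≥ ·) := (List.pairwise_cons.mp hs).2
    have hb' : ∀ a ∈ y :: t, a ≤ m := fun a ha => hb a (List.mem_cons_of_mem _ ha)
    by_cases hlt : y < h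
    · simp only [lpred, hlt, if_true]
      constructor
      · rw [List.pairwise_cons]
        refine ⟨fun b hb2 => ?_, hs'⟩
        have : b ≤ y := by
          rcases List.mem_cons.mp hb2 with rfl | hbt
          · exact le_refl _
          · exact (List.pairwise_cons.mp hs').1 b hbt
        omega
      · intro a ha
        rcases List.mem_cons.mp ha with rfl | ha'
        · exact le_trans (Nat.sub_le h 1) (hb h (by simp))
        · exact hb' a ha'
    · obtain ⟨ihs, ihb⟩ := lpred_sorted m (y :: t) hs' hb'
      simp only [lpred, hlt, if_false]
      constructor
      · rw [List.pairwise_cons]; exact ⟨fun b hb2 => ihb b hb2, ihs⟩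
      · intro a ha
        rcases List.mem_cons.mp ha with rfl | ha'
        · exact le_refl _
        · exact ihb a ha'

lemma lmu_lpred (m : ℕ) : ∀ t : List ℕ, t ≠ [] → lmu m (lpred m t) < lmu m t
  | [], h => absurd rfl h
  | [h], _ => by
    by_cases h0 : h = 0 <;> simp [lpred, h0, lmu] <;> omega
  | h :: y :: t, _ => by
    by_cases hlt : y < h
    · simp only [lpred, hlt, if_true, lmu]; omega
    · have ih : lmu m (lpred m (y :: t)) < lmu m (y :: t) :=
        lmu_lpred m (y :: t) (by simp)
      simp only [lpred, hlt, if_false, lmu]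
      have h2 : (lmu m (lpred m (y :: t)) + 1) * (m + 2) ≤ lmu m (y :: t) * (m + 2) :=
        Nat.mul_le_mul_right _ ih
      simp only [lmu] at h2
      nlinarith [h2]

lemma lgen_reaches (m : ℕ) : ∀ N t, lmu m t ≤ N → t.Pairwise (· ≥ ·) →
    (∀ a ∈ t, a ≤ m) → ∃ n, lgen m n = t := by
  intro N
  induction N with
  | zero =>
    intro t hmu _ _
    cases t with
    | nil => exact ⟨0, rfl⟩
    | cons h t => simp [lmu] at hmu
  | succ N ih =>
    intro t hmu hs hb
    cases ht : t == [] with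
    | true => exact ⟨0, by simp_all [lgen]⟩
    | false =>
      have htne : t ≠ [] := by simpa using ht
      obtain ⟨hps, hpb⟩ := lpred_sorted m t hs hb
      have hlt := lmu_lpred m t htne
      obtain ⟨n, hn⟩ := ih (lpred m t) (by omega) hps hpb
      exact ⟨n + 1, by simp [lgen, hn, next_lpred m t htne hs hb]⟩

theorem stmt_16 (g : List ℕ) (hne : g ≠ []) (hpos : ∀ x ∈ g, 0 < x)
    (x : ℕ) (hx : x ∈ AddSubmonoid.closure {y : ℕ | y ∈ g}) :
    ∃ n : ℕ, mgen g n = x := by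
  obtain ⟨l, hl, hsum⟩ := AddSubmonoid.exists_list_of_mem_closure hx
  -- index list
  set m := g.length - 1 with hm
  have hglen : 0 < g.length := List.length_pos_iff.mpr hne
  set il := l.map (fun y => List.idxOf y g) with hil
  have hidx : ∀ i ∈ il, i ≤ m := by
    intro i hi
    simp only [hil, List.mem_map] at hi
    obtain ⟨y, hy, rfl⟩ := hi
    have := List.idxOf_lt_length_iff.mpr (hl y hy)
    omega
  -- sorted version
  set t := il.insertionSort (· ≥ ·) with htdef
  have hperm : t.Perm il := il.perm_insertionSort (· ≥ ·)
  have hts : t.Pairwise (· ≥ ·) := List.pairwise_insertionSort (· ≥ ·) il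
  have htb : ∀ a ∈ t, a ≤ m := fun a ha => hidx a (hperm.mem_iff.mp ha)
  obtain ⟨n, hn⟩ := lgen_reaches m (lmu m t) t le_rfl hts htb
  refine ⟨n, ?_⟩
  have hmap : ((t.map (fun i => g.getD i 0))).sum = ((il.map (fun i => g.getD i 0))).sum :=
    (hperm.map _).sum_eq
  have : ((il.map (fun i => g.getD i 0))).sum = l.sum := by
    rw [hil, List.map_map]
    have h2 : List.map ((fun i => g.getD i 0) ∘ fun y => List.idxOf y g) l = List.map id l := by
      apply List.map_congr_left
      intro y hy
      have hlt := List.idxOf_lt_length_iff.mpr (hl y hy)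
      simp only [Function.comp_apply, id_eq]
      rw [List.getD_eq_getElem _ _ hlt, List.getElem_idxOf]
    rw [h2, List.map_id]
  rw [mgen, hn, hmap, this, hsum]
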